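/- Variable gadget soundness (consistency): In the variable gadget with inner courses D_L, D_C, D_R (each capacity 1) and students s_T (preference list {D_L,D_C}, {D_L,O_T^1,…,O_T^5}, {D_R}) and s_F (preference list {D_R,D_C}, {D_R,O_F^1,…,O_F^5}, {D_L}), in any exact CEEI (clearing error 0, equal budgets b_i = 1) it is impossible that s_T takes {D_L,O_T^1,…,O_T^5} and simultaneously s_F takes {D_R,O_F^1,…,O_F^5}: otherwise neither student is assigned D_C, and if p(D_C) = 0 then both students can afford and strictly prefer their first-listed bundle containing D_C, while if p(D_C) > 0 then D_C is undersubscribed, contradicting exact market clearing. -/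

import Mathlib

open Finset

/-- An economy: course capacities and, for each student, an ordered list
(most preferred first) of permissible course bundles. -/
structure Econ (N M : ℕ) where
  q : Fin M → ℕ
  pref : Fin N → List (Finset (Fin M))

/-- Total price of a bundle. -/
def cost {M : ℕ} (p : Fin M → ℝ) (S : Finset (Fin M)) : ℝ := ∑ j ∈ S, p j

/-- `Chooses p bdg l S`: `S` is the most preferred affordable bundle in the
ordered list `l` (most preferred first) at prices `p` with budget `bdg`
(`S = ∅` if no listed bundle is affordable). -/
def Chooses {M : ℕ} (p : Fin M → ℝ) (bdg : ℝ) (l : List (Finset (Fin M)))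
    (S : Finset (Fin M)) : Prop :=
  (S = ∅ ∧ ∀ T ∈ l, ¬ cost p T ≤ bdg) ∨
  (S ∈ l ∧ cost p S ≤ bdg ∧ ∀ T ∈ l.take (l.idxOf S), ¬ cost p T ≤ bdg)

/-- Number of students enrolled in course `j`. -/
def enroll {N M : ℕ} (x : Fin N → Finset (Fin M)) (j : Fin M) : ℕ :=
  (univ.filter fun i => j ∈ x i).card

/-- Clearing error of course `j`: oversubscription always counts; for a
positively priced course undersubscription counts as well. -/
noncomputable def zerr {N M : ℕ} (E : Econ N M) (p : Fin M → ℝ) (x : Fin N → Finset (Fin M))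
    (j : Fin M) : ℝ :=
  if 0 < p j then (enroll x j : ℝ) - E.q j
  else max ((enroll x j : ℝ) - E.q j) 0

/-- L2 norm of the clearing-error vector. -/
noncomputable def clearErr {N M : ℕ} (E : Econ N M) (p : Fin M → ℝ)
    (x : Fin N → Finset (Fin M)) : ℝ :=
  Real.sqrt (∑ j, (zerr E p x j) ^ 2)

/-- An `(α,β)`-CEEI: nonnegative prices, budgets in `[1,1+β]`, every student
is allocated her most preferred affordable bundle, and the total clearing
error is at most `α`. -/
structure IsCEEI {N M : ℕ} (E : Econ N M) (α β : ℝ) (p : Fin M → ℝ)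
    (b : Fin N → ℝ) (x : Fin N → Finset (Fin M)) : Prop where
  price_nonneg : ∀ j, 0 ≤ p j
  budget : ∀ i, 1 ≤ b i ∧ b i ≤ 1 + β
  alloc : ∀ i, Chooses p (b i) (E.pref i) (x i)
  clearing : clearErr E p x ≤ α

/-- Student `i` is interested in course `j` (lists some bundle containing it). -/
def Interested {N M : ℕ} (E : Econ N M) (j : Fin M) (i : Fin N) : Prop :=
  ∃ S ∈ E.pref i, j ∈ S

/-- **Variable gadget soundness (consistency).** In the variable gadget, with
inner courses `DL, DC, DR` of capacity 1, student `sT` with preference list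
`({DL,DC}, {DL,OT 0,…,OT 4}, {DR})` and student `sF` with preference list
`({DR,DC}, {DR,OF 0,…,OF 4}, {DL})`, where `DC` appears only in the first
bundle of each of the two students, in any exact CEEI (a `(0,0)`-CEEI, so
budgets all equal 1 and clearing error 0) it is impossible that `sT` takes
`{DL,OT 0,…,OT 4}` while simultaneously `sF` takes `{DR,OF 0,…,OF 4}`. -/
theorem variable_gadget_soundness {N M : ℕ} (E : Econ N M)
    (DL DC DR : Fin M) (OT OF : Fin 5 → Fin M)
    (hOT : Function.Injective OT) (hOF : Function.Injective OF)
    (hdistinct : DL ≠ DC ∧ DL ≠ DR ∧ DC ≠ DR)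
    (hOTD : ∀ t, OT t ≠ DL ∧ OT t ≠ DC ∧ OT t ≠ DR)
    (hOFD : ∀ t, OF t ≠ DL ∧ OF t ≠ DC ∧ OF t ≠ DR)
    (hOTF : ∀ t t', OT t ≠ OF t')
    (sT sF : Fin N) (hsTF : sT ≠ sF)
    (hprefT : E.pref sT =
      [({DL, DC} : Finset (Fin M)), insert DL (univ.image OT), ({DR} : Finset (Fin M))])
    (hprefF : E.pref sF =
      [({DR, DC} : Finset (Fin M)), insert DR (univ.image OF), ({DL} : Finset (Fin M))])
    (hqL : E.q DL = 1) (hqC : E.q DC = 1) (hqR : E.q DR = 1)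
    (hDCexcl : ∀ i : Fin N, ∀ S ∈ E.pref i, DC ∈ S →
      (i = sT ∧ S = ({DL, DC} : Finset (Fin M))) ∨
      (i = sF ∧ S = ({DR, DC} : Finset (Fin M))))
    (p : Fin M → ℝ) (b : Fin N → ℝ) (x : Fin N → Finset (Fin M))
    (hC : IsCEEI E 0 0 p b x) :
    ¬ (x sT = insert DL (univ.image OT) ∧ x sF = insert DR (univ.image OF)) := by
  rintro ⟨hT, hF⟩
  obtain ⟨hLC, hLR, hCR⟩ := hdistinct
  set BT : Finset (Fin M) := insert DL (univ.image OT) with hBT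
  set BF : Finset (Fin M) := insert DR (univ.image OF) with hBF
  have hDCBT : DC ∉ BT := by
    simp only [hBT, Finset.mem_insert, Finset.mem_image]
    rintro (h | ⟨t, -, ht⟩)
    · exact hLC h.symm
    · exact (hOTD t).2.1 ht
  have hDCBF : DC ∉ BF := by
    simp only [hBF, Finset.mem_insert, Finset.mem_image]
    rintro (h | ⟨t, -, ht⟩)
    · exact hCR h
    · exact (hOFD t).2.1 ht
  have hbT : b sT = 1 := le_antisymm (by simpa using (hC.budget sT).2) (hC.budget sT).1
  have hsum : ∑ j, (zerr E p x j) ^ 2 ≤ 0 := by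
    have := hC.clearing
    unfold clearErr at this
    nlinarith [Real.sq_sqrt (Finset.sum_nonneg (fun j (_ : j ∈ (univ : Finset (Fin M))) => sq_nonneg (zerr E p x j))), Real.sqrt_nonneg (∑ j, (zerr E p x j) ^ 2)]
  have hzerr : ∀ j, zerr E p x j = 0 := by
    intro j
    have h := (Finset.sum_eq_zero_iff_of_nonneg (fun j _ => sq_nonneg (zerr E p x j))).1
      (le_antisymm hsum (Finset.sum_nonneg (fun j _ => sq_nonneg (zerr E p x j)))) j (Finset.mem_univ j)
    exact pow_eq_zero_iff (by norm_num) |>.1 h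
  have hchT := hC.alloc sT
  rw [hprefT, hT] at hchT
  have hBTne : BT ≠ (∅ : Finset (Fin M)) := by
    simp [hBT]
  rcases hchT with ⟨h1, -⟩ | ⟨-, hcostBT, htake⟩
  · exact hBTne h1
  · have hne1 : BT ≠ ({DL, DC} : Finset (Fin M)) := by
      intro h
      exact hDCBT (h ▸ (by simp : DC ∈ ({DL, DC} : Finset (Fin M))))
    have hidx : ([({DL, DC} : Finset (Fin M)), BT, ({DR} : Finset (Fin M))]).idxOf BT = 1 := by
      rw [List.idxOf_cons_ne _ (by exact fun h => hne1 (Eq.symm (by simpa using h))), List.idxOf_cons_self]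
    rw [hidx] at htake
    have hfirst := htake ({DL, DC} : Finset (Fin M)) (by simp)
    rcases lt_or_eq_of_le (hC.price_nonneg DC) with hpos | hzero
    · have hz := hzerr DC
      unfold zerr at hz
      rw [if_pos hpos, hqC] at hz
      have hen : enroll x DC = 1 := by
        have : (enroll x DC : ℝ) = 1 := by push_cast at hz; linarith
        exact_mod_cast this
      obtain ⟨i, hi⟩ : ∃ i, DC ∈ x i := by
        have : (univ.filter fun i => DC ∈ x i).Nonempty := by
          rw [← Finset.card_pos, ← enroll, hen]; norm_num
        obtain ⟨i, hi⟩ := this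
        exact ⟨i, (Finset.mem_filter.1 hi).2⟩
      have hchi := hC.alloc i
      rcases hchi with ⟨h1, -⟩ | ⟨hmem, -, -⟩
      · rw [h1] at hi; simp at hi
      · rcases hDCexcl i (x i) hmem hi with ⟨hi1, hi2⟩ | ⟨hi1, hi2⟩
        · subst hi1; rw [hT] at hi2
          exact hDCBT (hi2 ▸ (by simp : DC ∈ ({DL, DC} : Finset (Fin M))))
        · subst hi1; rw [hF] at hi2
          exact hDCBF (hi2 ▸ (by simp : DC ∈ ({DR, DC} : Finset (Fin M))))
    · apply hfirst
      have hpair : cost p ({DL, DC} : Finset (Fin M)) = p DL + p DC :=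
        Finset.sum_pair hLC
      have hle : p DL ≤ cost p BT := by
        apply Finset.single_le_sum (fun j _ => hC.price_nonneg j)
        simp [hBT]
      rw [hpair, ← hzero]
      have : cost p BT ≤ b sT := hcostBT
      linarith
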